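/- Let d ≥ 1 and let X be an aperiodic minimal subshift over a nonempty finite alphabet. Then the path-connected components of the suspension SX are exactly the ℝ^d-orbits: for every T ∈ SX, the path component of T in SX equals {t +ᵥ T : t ∈ ℝ^d}. -/

import Mathlib

open Filter Topology

abbrev Zd (d : ℕ) := Fin d → ℤ
abbrev Rd (d : ℕ) := EuclideanSpace ℝ (Fin d)

def toRd {d : ℕ} (n : Zd d) : Rd d := WithLp.toLp 2 (fun i => (n i : ℝ))

def shift {d : ℕ} {A : Type*} (n : Zd d) (ω : Zd d → A) : Zd d → A := fun k => ω (k - n)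

structure IsSubshift {d : ℕ} {A : Type*} [TopologicalSpace A] (X : Set (Zd d → A)) : Prop where
  nonempty : X.Nonempty
  closed : IsClosed X
  shift_mem : ∀ n : Zd d, ∀ ω ∈ X, shift n ω ∈ X

def IsMinimal {d : ℕ} {A : Type*} [TopologicalSpace A] (X : Set (Zd d → A)) : Prop :=
  ∀ ω ∈ X, X ⊆ closure {ω' | ∃ n : Zd d, ω' = shift n ω}

def IsAperiodic {d : ℕ} {A : Type*} (X : Set (Zd d → A)) : Prop :=
  ∀ ω ∈ X, ∀ n : Zd d, shift n ω = ω → n = 0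

def suspRel {d : ℕ} {A : Type*} [TopologicalSpace A] (X : Set (Zd d → A)) :
    X × Rd d → X × Rd d → Prop :=
  fun p q => ∃ n : Zd d, (q.1 : Zd d → A) = shift n (p.1 : Zd d → A) ∧ q.2 = p.2 - toRd n

abbrev Susp {d : ℕ} {A : Type*} [TopologicalSpace A] (X : Set (Zd d → A)) :=
  Quot (suspRel X)

instance {d : ℕ} {A : Type*} [TopologicalSpace A] (X : Set (Zd d → A)) :
    VAdd (Rd d) (Susp X) where
  vadd t := Quot.lift (fun p => Quot.mk (suspRel X) (p.1, p.2 + t))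
    (fun p q hpq => by
      obtain ⟨n, h1, h2⟩ := hpq
      exact Quot.sound ⟨n, h1, by rw [h2, sub_add_eq_add_sub]⟩)

def iota {d : ℕ} {A : Type*} [TopologicalSpace A] (X : Set (Zd d → A)) : X → Susp X :=
  fun ω => Quot.mk _ (ω, 0)

def box (d : ℕ) (n : ℕ) : Set (Zd d) := {k | ∀ i, |k i| ≤ (n : ℤ)}

noncomputable def complexity {d : ℕ} {A : Type*} (X : Set (Zd d → A)) (n : ℕ) : ℕ :=
  Set.ncard ((fun ω => (fun k : box d n => ω k.1)) '' X)

noncomputable def repetitivity {d : ℕ} {A : Type*} (X : Set (Zd d → A)) (n : ℕ) : ℝ :=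
  sInf {C : ℝ | 0 ≤ C ∧ ∀ ω ∈ X, ∀ ω₀ ∈ X, ∃ k : Zd d,
    ‖toRd k‖ ≤ C ∧ ∀ j ∈ box d n, shift k ω j = ω₀ j}

def IsCocycleFor {d : ℕ} {A A' : Type*} [TopologicalSpace A] [TopologicalSpace A']
    {X : Set (Zd d → A)} {X' : Set (Zd d → A')}
    (h : Susp X ≃ₜ Susp X') (c : Susp X × Rd d → Rd d) : Prop :=
  ∀ (T : Susp X) (x : Rd d), h (x +ᵥ T) = c (T, x) +ᵥ h T

section Aux

open Set Metric

variable {d : ℕ} {A : Type*} [TopologicalSpace A] {X : Set (Zd d → A)}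

lemma shift_shift' (m n : Zd d) (ω : Zd d → A) :
    shift m (shift n ω) = shift (n + m) ω := by
  funext k
  simp only [shift]
  congr 1
  abel

lemma shift_zero' (ω : Zd d → A) : shift (0 : Zd d) ω = ω := by
  funext k; simp [shift]

lemma toRd_zero {d : ℕ} : toRd (0 : Zd d) = 0 := by
  ext i; simp [toRd]

lemma toRd_neg {d : ℕ} (n : Zd d) : toRd (-n) = -toRd n := by
  ext i; simp [toRd]

lemma toRd_add {d : ℕ} (m n : Zd d) : toRd (m + n) = toRd m + toRd n := by
  ext i; simp [toRd]

lemma suspRel_equivalence : Equivalence (suspRel X) := by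
  constructor
  · intro p
    exact ⟨0, (shift_zero' _).symm, by rw [toRd_zero, sub_zero]⟩
  · rintro p q ⟨n, h1, h2⟩
    refine ⟨-n, ?_, ?_⟩
    · rw [h1, shift_shift', add_neg_cancel, shift_zero']
    · rw [h2, toRd_neg]; abel
  · rintro p q r ⟨n, h1, h2⟩ ⟨m, h3, h4⟩
    refine ⟨n + m, ?_, ?_⟩
    · rw [h3, h1, shift_shift']
    · rw [h4, h2, toRd_add]; abel

lemma susp_quot_eq {p p' : X × Rd d} :
    Quot.mk (suspRel X) p = Quot.mk (suspRel X) p' ↔ suspRel X p p' :=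
  Quot.eq.trans (suspRel_equivalence).eqvGen_iff

lemma susp_vadd_mk (t : Rd d) (p : X × Rd d) :
    t +ᵥ Quot.mk (suspRel X) p = Quot.mk (suspRel X) (p.1, p.2 + t) := rfl

lemma susp_vadd_vadd (s t : Rd d) (S : Susp X) :
    s +ᵥ (t +ᵥ S) = (t + s) +ᵥ S := by
  induction S using Quot.ind with
  | _ p =>
    show Quot.mk _ (p.1, p.2 + t + s) = Quot.mk _ (p.1, p.2 + (t + s))
    rw [add_assoc]

lemma susp_zero_vadd (S : Susp X) : (0 : Rd d) +ᵥ S = S := by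
  induction S using Quot.ind with
  | _ p =>
    show Quot.mk _ (p.1, p.2 + 0) = Quot.mk _ p
    rw [add_zero]

lemma susp_mk_fst_eq (ω : X) (y y' : Rd d) :
    Quot.mk (suspRel X) (ω, y') = (y' - y) +ᵥ Quot.mk (suspRel X) (ω, y) := by
  rw [susp_vadd_mk]
  congr 1
  simp

/-- The shift as a map `X → X`. -/
noncomputable def shiftX (hX : IsSubshift X) (n : Zd d) (ω : X) : X :=
  ⟨shift n ω.1, hX.shift_mem n ω.1 ω.2⟩

lemma continuous_shiftX (hX : IsSubshift X) (n : Zd d) :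
    Continuous (shiftX hX n) := by
  refine Continuous.subtype_mk ?_ _
  exact continuous_pi fun k => (continuous_apply (k - n)).comp continuous_subtype_val

/-- Translation by `n` on `X × ℝ^d`. -/
noncomputable def tau (hX : IsSubshift X) (n : Zd d) (p : X × Rd d) : X × Rd d :=
  (shiftX hX n p.1, p.2 - toRd n)

lemma continuous_tau (hX : IsSubshift X) (n : Zd d) : Continuous (tau hX n) :=
  ((continuous_shiftX hX n).comp continuous_fst).prodMk
    (continuous_snd.sub continuous_const)

lemma suspRel_iff_tau (hX : IsSubshift X) {w p : X × Rd d} :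
    suspRel X w p ↔ ∃ n : Zd d, p = tau hX n w := by
  constructor
  · rintro ⟨n, h1, h2⟩
    refine ⟨n, Prod.ext (Subtype.ext ?_) ?_⟩
    · exact h1
    · exact h2
  · rintro ⟨n, rfl⟩
    exact ⟨n, rfl, rfl⟩

lemma tau_tau (hX : IsSubshift X) (n : Zd d) (p : X × Rd d) :
    tau hX n (tau hX (-n) p) = p := by
  refine Prod.ext (Subtype.ext ?_) ?_
  · show shift n (shift (-n) p.1.1) = p.1.1
    rw [shift_shift', neg_add_cancel, shift_zero']
  · show p.2 - toRd (-n) - toRd n = p.2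
    rw [toRd_neg]; abel

lemma tau_tau' (hX : IsSubshift X) (n : Zd d) (p : X × Rd d) :
    tau hX (-n) (tau hX n p) = p := by
  have := tau_tau hX (-n) p
  rwa [neg_neg] at this

lemma isOpenMap_suspMk (hX : IsSubshift X) :
    IsOpenMap (Quot.mk (suspRel X)) := by
  intro W hW
  rw [isOpen_coinduced]
  have : Quot.mk (suspRel X) ⁻¹' (Quot.mk (suspRel X) '' W) =
      ⋃ n : Zd d, tau hX n ⁻¹' W := by
    ext p
    simp only [mem_preimage, mem_image, mem_iUnion]
    constructor
    · rintro ⟨w, hwW, hw⟩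
      obtain ⟨n, rfl⟩ := (suspRel_iff_tau hX).mp (susp_quot_eq.mp hw)
      exact ⟨-n, by rwa [tau_tau']⟩
    · rintro ⟨n, hn⟩
      refine ⟨tau hX n p, hn, ?_⟩
      exact (susp_quot_eq.mpr ((suspRel_iff_tau hX).mpr ⟨-n, (tau_tau' hX n p).symm⟩))
  rw [this]
  exact isOpen_iUnion fun n => (continuous_tau hX n).isOpen_preimage W hW

lemma one_le_norm_toRd {d : ℕ} {n : Zd d} (hn : n ≠ 0) : 1 ≤ ‖toRd n‖ := by
  obtain ⟨i, hi⟩ := Function.ne_iff.mp hn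
  have h1 : (1 : ℝ) ≤ ‖toRd n i‖ := by
    rw [Real.norm_eq_abs]
    have : (1 : ℤ) ≤ |n i| := Int.one_le_abs hi
    calc (1 : ℝ) ≤ |(n i : ℝ)| := by exact_mod_cast this
    _ = |(toRd n i)| := by simp [toRd]
  have h2 : ‖toRd n i‖ ^ 2 ≤ ∑ j, ‖toRd n j‖ ^ 2 :=
    Finset.single_le_sum (f := fun j => ‖toRd n j‖ ^ 2)
      (fun j _ => sq_nonneg _) (Finset.mem_univ i)
  rw [EuclideanSpace.norm_eq]
  calc (1 : ℝ) = Real.sqrt 1 := Real.sqrt_one.symm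
  _ ≤ Real.sqrt (∑ j, ‖toRd n j‖ ^ 2) := by
      apply Real.sqrt_le_sqrt
      nlinarith
  _ = Real.sqrt (∑ j, ‖toRd n j‖ ^ 2) := rfl

lemma injOn_suspMk (x₀ : Rd d) :
    Set.InjOn (Quot.mk (suspRel X)) ((univ : Set X) ×ˢ ball x₀ (1/2)) := by
  rintro p hp p' hp' h
  obtain ⟨n, h1, h2⟩ := susp_quot_eq.mp h
  have hn : n = 0 := by
    by_contra hn0
    have := one_le_norm_toRd hn0
    have hd1 : dist p.2 x₀ < 1/2 := hp.2
    have hd2 : dist p'.2 x₀ < 1/2 := hp'.2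
    have : ‖toRd n‖ = dist p.2 p'.2 := by
      rw [h2, dist_eq_norm]
      congr 1
      abel
    have hlt : dist p.2 p'.2 < 1 := by
      calc dist p.2 p'.2 ≤ dist p.2 x₀ + dist x₀ p'.2 := dist_triangle _ _ _
      _ < 1/2 + 1/2 := by rw [dist_comm x₀ p'.2]; linarith
      _ = 1 := by norm_num
    linarith [one_le_norm_toRd hn0, this ▸ hlt]
  subst hn
  refine Prod.ext (Subtype.ext ?_) ?_ |>.symm
  · rw [h1, shift_zero']
  · rw [h2, toRd_zero, sub_zero]

/-- local continuous section of the quotient map over the image of a small box -/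
lemma exists_susp_section (hX : IsSubshift X) (x₀ : Rd d) :
    ∃ f : Susp X → X × Rd d,
      ContinuousOn f (Quot.mk (suspRel X) '' ((univ : Set X) ×ˢ ball x₀ (1/2))) ∧
      ∀ p ∈ (univ : Set X) ×ˢ ball x₀ (1/2), f (Quot.mk (suspRel X) p) = p := by
  classical
  set V : Set (X × Rd d) := (univ : Set X) ×ˢ ball x₀ (1/2) with hV
  set q : X × Rd d → Susp X := Quot.mk (suspRel X) with hq
  haveI : Nonempty X := ⟨⟨hX.nonempty.choose, hX.nonempty.choose_spec⟩⟩
  set f : Susp X → X × Rd d := fun S =>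
    if h : ∃ p, p ∈ V ∧ q p = S then h.choose else Classical.arbitrary _ with hf
  have hfspec : ∀ p ∈ V, f (q p) = p := by
    intro p hp
    have hex : ∃ p', p' ∈ V ∧ q p' = q p := ⟨p, hp, rfl⟩
    have h1 := hex.choose_spec
    simp only [hf, dif_pos hex]
    exact injOn_suspMk x₀ h1.1 hp h1.2
  refine ⟨f, ?_, hfspec⟩
  rw [_root_.continuousOn_iff]
  rintro S ⟨p, hpV, rfl⟩ t ht hft
  refine ⟨q '' (t ∩ V), isOpenMap_suspMk hX _ (ht.inter ?_), ⟨p, ⟨?_, hpV⟩, rfl⟩, ?_⟩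
  · exact isOpen_univ.prod isOpen_ball
  · rw [hfspec p hpV] at hft; exact hft
  · rintro S' ⟨⟨p', ⟨hp't, hp'V⟩, rfl⟩, -⟩
    show f (q p') ∈ t
    rw [hfspec p' hp'V]
    exact hp't

end Aux

theorem path_components_are_orbits
    {d : ℕ} (hd : 1 ≤ d)
    {A : Type*} [Fintype A] [Nonempty A] [TopologicalSpace A] [DiscreteTopology A]
    (X : Set (Zd d → A))
    (hX : IsSubshift X) (hXmin : IsMinimal X) (hXap : IsAperiodic X) :
    ∀ T : Susp X, pathComponent T = {S : Susp X | ∃ t : Rd d, S = t +ᵥ T} := by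
  intro T
  ext S
  simp only [Set.mem_setOf_eq]
  constructor
  · intro hS
    have hj : Joined T S := hS
    obtain ⟨γ⟩ := hj
    -- Key local lemma: the orbit class of `γ.extend` is locally constant.
    have key : ∀ t : ℝ, ∃ ε > (0:ℝ), ∀ t₁ ∈ Set.Ioo (t-ε) (t+ε), ∀ t₂ ∈ Set.Ioo (t-ε) (t+ε),
        ∃ u : Rd d, γ.extend t₂ = u +ᵥ γ.extend t₁ := by
      intro t
      obtain ⟨p, hp⟩ := Quot.exists_rep (γ.extend t)
      obtain ⟨f, hfc, hfs⟩ := exists_susp_section hX p.2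
      set V : Set (X × Rd d) := (Set.univ : Set X) ×ˢ Metric.ball p.2 (1/2) with hVdef
      set U : Set (Susp X) := Quot.mk (suspRel X) '' V with hUdef
      have hUopen : IsOpen U := isOpenMap_suspMk hX V (isOpen_univ.prod Metric.isOpen_ball)
      have hTU : γ.extend t ∈ U :=
        ⟨p, ⟨Set.mem_univ _, Metric.mem_ball_self (by norm_num)⟩, hp⟩
      have hnb : γ.extend ⁻¹' U ∈ 𝓝 t :=
        (hUopen.preimage γ.continuous_extend).mem_nhds hTU
      obtain ⟨ε, hε, hball⟩ := Metric.mem_nhds_iff.mp hnb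
      refine ⟨ε, hε, ?_⟩
      have hsub : Set.Ioo (t-ε) (t+ε) ⊆ γ.extend ⁻¹' U := by
        rw [← Real.ball_eq_Ioo]; exact hball
      have hcont : ContinuousOn (fun s => (f (γ.extend s)).1) (Set.Ioo (t-ε) (t+ε)) :=
        continuous_fst.comp_continuousOn
          (hfc.comp γ.continuous_extend.continuousOn hsub)
      have hsub2 : ((fun s => (f (γ.extend s)).1) '' Set.Ioo (t-ε) (t+ε)).Subsingleton :=
        (isPreconnected_Ioo.image _ hcont).subsingleton
      have hq : ∀ s ∈ Set.Ioo (t-ε) (t+ε),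
          Quot.mk (suspRel X) (f (γ.extend s)) = γ.extend s := by
        intro s hs
        obtain ⟨p', hp'V, hp'⟩ := hsub hs
        rw [← hp', hfs p' hp'V]
      intro t₁ h1 t₂ h2
      have hfst : (f (γ.extend t₁)).1 = (f (γ.extend t₂)).1 :=
        hsub2 (Set.mem_image_of_mem _ h1) (Set.mem_image_of_mem _ h2)
      have h2' : f (γ.extend t₂) = ((f (γ.extend t₁)).1, (f (γ.extend t₂)).2) :=
        Prod.ext hfst.symm rfl
      obtain ⟨u, hu⟩ : ∃ u : Rd d, Quot.mk (suspRel X) (f (γ.extend t₂))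
          = u +ᵥ Quot.mk (suspRel X) (f (γ.extend t₁)) :=
        ⟨_, by
          rw [h2']
          exact susp_mk_fst_eq (f (γ.extend t₁)).1 (f (γ.extend t₁)).2 (f (γ.extend t₂)).2⟩
      refine ⟨u, ?_⟩
      rw [← hq t₂ h2, ← hq t₁ h1]
      exact hu
    set K : Set ℝ := {t : ℝ | ∃ u : Rd d, γ.extend t = u +ᵥ T} with hKdef
    have hK0 : (0:ℝ) ∈ K := by
      refine ⟨0, ?_⟩
      rw [susp_zero_vadd, Path.extend_zero]
    have hKopen : IsOpen K := by
      rw [isOpen_iff_mem_nhds]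
      rintro t ⟨u, hu⟩
      obtain ⟨ε, hε, hloc⟩ := key t
      have htmem : t ∈ Set.Ioo (t-ε) (t+ε) := ⟨by linarith, by linarith⟩
      refine Filter.mem_of_superset (isOpen_Ioo.mem_nhds htmem) ?_
      intro t' ht'
      obtain ⟨v, hv⟩ := hloc t htmem t' ht'
      exact ⟨u + v, by rw [hv, hu, susp_vadd_vadd]⟩
    have hKclosed : IsClosed K := by
      refine isClosed_of_closure_subset ?_
      intro t ht
      obtain ⟨ε, hε, hloc⟩ := key t
      have htmem : t ∈ Set.Ioo (t-ε) (t+ε) := ⟨by linarith, by linarith⟩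
      obtain ⟨t', ht'Ioo, ht'K⟩ := mem_closure_iff_nhds.mp ht _ (isOpen_Ioo.mem_nhds htmem)
      obtain ⟨u, hu⟩ := ht'K
      obtain ⟨v, hv⟩ := hloc t' ht'Ioo t htmem
      exact ⟨u + v, by rw [hv, hu, susp_vadd_vadd]⟩
    have hKuniv : K = Set.univ := by
      rcases isClopen_iff.mp ⟨hKclosed, hKopen⟩ with h | h
      · exact absurd (h ▸ hK0) (Set.notMem_empty _)
      · exact h
    have h1K : (1:ℝ) ∈ K := hKuniv ▸ Set.mem_univ _
    obtain ⟨u, hu⟩ := h1K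
    rw [Path.extend_one] at hu
    exact ⟨u, hu⟩
  · rintro ⟨t, rfl⟩
    show Joined T (t +ᵥ T)
    induction T using Quot.ind with
    | _ p =>
      refine ⟨⟨⟨fun s => Quot.mk (suspRel X) (p.1, p.2 + (s:ℝ) • t), ?_⟩, ?_, ?_⟩⟩
      · exact continuous_quot_mk.comp
          (continuous_const.prodMk
            (continuous_const.add (continuous_subtype_val.smul continuous_const)))
      · show Quot.mk (suspRel X) (p.1, p.2 + ((0:unitInterval):ℝ) • t) = Quot.mk (suspRel X) p
        norm_num
      · show Quot.mk (suspRel X) (p.1, p.2 + ((1:unitInterval):ℝ) • t)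
            = t +ᵥ Quot.mk (suspRel X) p
        rw [susp_vadd_mk]
        norm_num
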